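/- More generally, for nonempty subsets τ_{i_1},…,τ_{i_n} of [m] (proper subsets), the intersection U_{i_1} ∩ ⋯ ∩ U_{i_n} of the interiors of the realizations of their stars in ∂Δ^{m-1} is nonempty if and only if τ_{i_1} ∪ ⋯ ∪ τ_{i_n} ≠ [m]. -/

import Mathlib

open Classical
noncomputable section

/-- The support of a point of the standard simplex, as a finset. -/
def supp {m : ℕ} (x : Fin m → ℝ) : Finset (Fin m) :=
  Finset.univ.filter (fun i => x i ≠ 0)

/-- The geometric realization `|∂Δ^{m-1}|` of the boundary of the simplex on `[m]`. -/
def bdSimplex (m : ℕ) : Set (Fin m → ℝ) :=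
  {x | x ∈ stdSimplex ℝ (Fin m) ∧ supp x ≠ Finset.univ}

/-- The geometric realization of a collection `L` of faces, inside `|∂Δ^{m-1}|`. -/
def realize {m : ℕ} (L : Set (Finset (Fin m))) : Set (bdSimplex m) :=
  {x | ∃ σ ∈ L, supp x.1 ⊆ σ}

/-- The star of `τ` in `∂Δ^{m-1}`: faces `σ` with `σ ∪ τ ∈ ∂Δ^{m-1}`. -/
def starC {m : ℕ} (τ : Finset (Fin m)) : Set (Finset (Fin m)) :=
  {σ | σ ∪ τ ≠ Finset.univ}

/-- `U_τ`: the interior, taken in `|∂Δ^{m-1}|`, of the realized star of `τ`. -/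
def Ustar {m : ℕ} (τ : Finset (Fin m)) : Set (bdSimplex m) :=
  interior (realize (starC τ))

/-- The relative interior of the realized face `σ` inside `|∂Δ^{m-1}|`. -/
def relint {m : ℕ} (σ : Finset (Fin m)) : Set (bdSimplex m) :=
  {x | supp x.1 = σ}


lemma mem_supp_iff {m : ℕ} (x : Fin m → ℝ) (i : Fin m) : i ∈ supp x ↔ x i ≠ 0 := by
  simp [supp]

lemma realize_starC_eq {m : ℕ} (τ : Finset (Fin m)) :
    realize (starC τ) = {x : bdSimplex m | supp x.1 ∪ τ ≠ Finset.univ} := by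
  ext x
  constructor
  · rintro ⟨σ, hσ, hsub⟩ h
    exact hσ (Finset.univ_subset_iff.mp (h ▸ Finset.union_subset_union hsub subset_rfl))
  · intro h
    exact ⟨supp x.1, h, subset_rfl⟩

lemma isOpen_supp_superset {m : ℕ} (τ : Finset (Fin m)) :
    IsOpen {x : bdSimplex m | τ ⊆ supp x.1} := by
  have : {x : bdSimplex m | τ ⊆ supp x.1}
      = Subtype.val ⁻¹' (⋂ i ∈ (τ : Set (Fin m)), {y : Fin m → ℝ | y i ≠ 0}) := by
    ext x
    simp only [Set.mem_setOf_eq, Set.mem_preimage, Set.mem_iInter, Finset.mem_coe]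
    constructor
    · intro h i hi
      exact (mem_supp_iff x.1 i).mp (h hi)
    · intro h i hi
      exact (mem_supp_iff x.1 i).mpr (h i hi)
  rw [this]
  refine (IsOpen.preimage continuous_subtype_val ?_)
  refine Set.Finite.isOpen_biInter (τ : Set (Fin m)).toFinite (fun i _ => ?_)
  exact isClosed_singleton.isOpen_compl.preimage (continuous_apply i)

lemma ustar_eq {m : ℕ} (τ : Finset (Fin m)) :
    Ustar τ = {x : bdSimplex m | τ ⊆ supp x.1} := by
  apply subset_antisymm
  · -- interior ⊆ {x | τ ⊆ supp x}
    intro x hx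
    by_contra hτ
    obtain ⟨j, hjτ, hj⟩ : ∃ j ∈ τ, x.1 j = 0 := by
      simpa [mem_supp_iff, Finset.subset_iff] using hτ
    -- from x ∈ bdSimplex we get two distinct coordinates, hence m ≥ 2
    obtain ⟨i, hi⟩ : ∃ i, x.1 i ≠ 0 := by
      by_contra h
      push_neg at h
      have := x.2.1.2
      simp [h] at this
    have hij : i ≠ j := fun h => hi (h ▸ hj)
    have hm2 : 2 ≤ m := by
      by_contra h
      push_neg at h
      interval_cases m
      · exact i.elim0
      · exact hij (Subsingleton.elim i j)
    have hm1pos : (0 : ℝ) < (m : ℝ) - 1 := by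
      have : (2 : ℝ) ≤ (m : ℝ) := by exact_mod_cast hm2
      linarith
    -- the perturbation direction
    set u : Fin m → ℝ := fun i => if i = j then 0 else ((m : ℝ) - 1)⁻¹ with hu
    have hsumu : ∑ i, u i = 1 := by
      have : ∑ i, u i = ∑ i ∈ Finset.univ.erase j, ((m : ℝ) - 1)⁻¹ := by
        rw [← Finset.add_sum_erase _ u (Finset.mem_univ j)]
        simp only [hu, if_pos rfl, zero_add]
        exact Finset.sum_congr rfl (fun i hi => if_neg (Finset.ne_of_mem_erase hi))
      rw [this, Finset.sum_const, Finset.card_erase_of_mem (Finset.mem_univ j),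
        Finset.card_univ, Fintype.card_fin, nsmul_eq_mul]
      have hm1 : ((m - 1 : ℕ) : ℝ) = (m : ℝ) - 1 := by
        have : 1 ≤ m := le_trans one_le_two hm2
        push_cast [this]
        ring
      rw [hm1, mul_inv_cancel₀ (ne_of_gt hm1pos)]
    have hupos : ∀ i, 0 ≤ u i := by
      intro i
      rw [hu]
      dsimp only
      split
      · exact le_refl 0
      · positivity
    -- the approximating sequence
    set ε : ℕ → ℝ := fun k => 1 / (k + 1) with hε
    have hεpos : ∀ k, 0 < ε k := fun k => by positivity
    have hεle : ∀ k, ε k ≤ 1 := by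
      intro k
      rw [hε]
      rw [div_le_one (by positivity)]
      linarith [Nat.cast_nonneg (α := ℝ) k]
    set y : ℕ → Fin m → ℝ := fun k i => (1 - ε k) * x.1 i + ε k * u i with hy
    have hy_mem : ∀ k, y k ∈ bdSimplex m := by
      intro k
      have hsupp : supp (y k) = Finset.univ.erase j := by
        ext i
        rw [mem_supp_iff, Finset.mem_erase]
        simp only [Finset.mem_univ, and_true]
        constructor
        · intro h hij'
          apply h
          rw [hy]
          simp only [hij', hj, hu, if_pos rfl, mul_zero, add_zero]
        · intro hij' h
          have h1 : 0 ≤ (1 - ε k) * x.1 i := by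
            have := x.2.1.1 i
            nlinarith [hεle k]
          have h2 : 0 < ε k * u i := by
            have : u i = ((m : ℝ) - 1)⁻¹ := by rw [hu]; exact if_neg hij'
            rw [this]
            exact mul_pos (hεpos k) (inv_pos.mpr hm1pos)
          rw [hy] at h
          dsimp only at h
          nlinarith
      refine ⟨⟨fun i => ?_, ?_⟩, ?_⟩
      · have h1 : 0 ≤ (1 - ε k) * x.1 i := by
          have := x.2.1.1 i
          nlinarith [hεle k]
        have h2 : 0 ≤ ε k * u i := mul_nonneg (le_of_lt (hεpos k)) (hupos i)
        rw [hy]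
        dsimp only
        linarith
      · rw [hy]
        simp only
        rw [Finset.sum_add_distrib, ← Finset.mul_sum, ← Finset.mul_sum, x.2.1.2, hsumu]
        ring
      · rw [hsupp]
        intro h
        have := h ▸ Finset.mem_univ j
        exact absurd this (Finset.notMem_erase j _)
    set Y : ℕ → bdSimplex m := fun k => ⟨y k, hy_mem k⟩ with hY
    have hten : Filter.Tendsto Y Filter.atTop (nhds x) := by
      rw [tendsto_subtype_rng]
      rw [tendsto_pi_nhds]
      intro i
      have h0 : Filter.Tendsto ε Filter.atTop (nhds 0) :=
        tendsto_one_div_add_atTop_nhds_zero_nat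
      have key : Filter.Tendsto (fun k => (1 - ε k) * x.1 i + ε k * u i) Filter.atTop
          (nhds ((1 - 0) * x.1 i + 0 * u i)) :=
        ((tendsto_const_nhds.sub h0).mul tendsto_const_nhds).add (h0.mul tendsto_const_nhds)
      simp only [sub_zero, one_mul, zero_mul, add_zero] at key
      simp only [hY, hy]
      exact key
    have hmem : realize (starC τ) ∈ nhds x := mem_interior_iff_mem_nhds.mp hx
    obtain ⟨k, hk⟩ := (hten.eventually_mem hmem).exists
    rw [realize_starC_eq] at hk
    apply hk
    apply Finset.univ_subset_iff.mp
    intro i _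
    by_cases hij' : i = j
    · exact Finset.mem_union_right _ (hij' ▸ hjτ)
    · apply Finset.mem_union_left
      rw [mem_supp_iff]
      intro h
      have h2 : 0 < ε k * u i := by
        have : u i = ((m : ℝ) - 1)⁻¹ := by rw [hu]; exact if_neg hij'
        rw [this]
        exact mul_pos (hεpos k) (inv_pos.mpr hm1pos)
      have h1 : 0 ≤ (1 - ε k) * x.1 i := by
        have := x.2.1.1 i
        nlinarith [hεle k]
      have : (Y k).1 i = (1 - ε k) * x.1 i + ε k * u i := rfl
      rw [this] at h
      nlinarith
  · -- open subset of realize (starC τ)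
    apply interior_maximal _ (isOpen_supp_superset τ)
    intro x hx
    rw [realize_starC_eq]
    have : supp x.1 ∪ τ = supp x.1 := Finset.union_eq_left.mpr hx
    rw [Set.mem_setOf_eq, this]
    exact x.2.2

/-- For nonempty proper subsets `τ_1, …, τ_n` of `[m]` (`n ≥ 1`), the
intersection `U_1 ∩ ⋯ ∩ U_n` of the interiors of the realized stars is nonempty iff
`τ_1 ∪ ⋯ ∪ τ_n ≠ [m]`. -/
theorem iInter_ustar_nonempty_iff {m n : ℕ} (hn : 0 < n) (τ : Fin n → Finset (Fin m))
    (h1 : ∀ a, (τ a).Nonempty) (h2 : ∀ a, τ a ≠ Finset.univ) :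
    (⋂ a, Ustar (τ a)).Nonempty ↔ Finset.univ.sup τ ≠ Finset.univ := by
  simp only [ustar_eq]
  constructor
  · rintro ⟨x, hx⟩ hsup
    simp only [Set.mem_iInter, Set.mem_setOf_eq] at hx
    apply x.2.2
    apply Finset.univ_subset_iff.mp
    rw [← hsup]
    exact Finset.sup_le (fun a _ => hx a)
  · intro hsup
    -- the barycenter of σ := sup τ
    set σ := Finset.univ.sup τ with hσ
    have hσne : σ.Nonempty := by
      obtain ⟨i, hi⟩ := h1 ⟨0, hn⟩
      exact ⟨i, (hσ ▸ Finset.le_sup (f := τ) (Finset.mem_univ (⟨0, hn⟩ : Fin n)) : τ ⟨0, hn⟩ ⊆ σ) hi⟩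
    set x : Fin m → ℝ := fun i => if i ∈ σ then (σ.card : ℝ)⁻¹ else 0 with hx
    have hcpos : (0 : ℝ) < σ.card := by
      exact_mod_cast Finset.card_pos.mpr hσne
    have hsupp : supp x = σ := by
      ext i
      rw [mem_supp_iff, hx]
      by_cases h : i ∈ σ
      · simp [h, ne_of_gt (inv_pos.mpr hcpos)]
      · simp [h]
    have hmem : x ∈ bdSimplex m := by
      refine ⟨⟨fun i => ?_, ?_⟩, ?_⟩
      · rw [hx]
        dsimp only
        split
        · positivity
        · exact le_refl 0
      · rw [hx]
        rw [Finset.sum_ite_mem, Finset.univ_inter, Finset.sum_const, nsmul_eq_mul,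
          mul_inv_cancel₀ (ne_of_gt hcpos)]
      · rw [hsupp]
        exact hsup
    refine ⟨⟨x, hmem⟩, ?_⟩
    simp only [Set.mem_iInter, Set.mem_setOf_eq]
    intro a
    rw [hsupp]
    exact hσ ▸ Finset.le_sup (f := τ) (Finset.mem_univ a)
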